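/- Let q ≥ p > k ≥ 2 be integers and let G be the complete bipartite graph K_{p,q}. Then γ_{×k,t}(G_I) = 2pk + (q − p)(k + 1). -/

import Mathlib

open SimpleGraph

/-- The inflated graph `G_I` of a graph `G`: its vertices are the darts (oriented edges) of
`G`; the darts with first coordinate `x` form the clique `X_x` (of size `deg x`), and each
edge `xy` of `G` gives the "blue" edge between the dart `(x,y)` and its reverse `(y,x)`;
these blue edges form a perfect matching.  Equivalently, `inflation G` is the line graph of
the subdivision of `G`. -/
def inflation {V : Type*} (G : SimpleGraph V) : SimpleGraph G.Dart :=
  SimpleGraph.fromRel (fun d₁ d₂ => d₁.toProd.1 = d₂.toProd.1 ∨ d₁.toProd = d₂.toProd.swap)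

/-- `S` is a `k`-tuple total dominating set of `H`: every vertex has at least `k`
neighbours in `S`. -/
def IsKTDS {W : Type*} (H : SimpleGraph W) (k : ℕ) (S : Set W) : Prop :=
  ∀ v : W, k ≤ (S ∩ H.neighborSet v).ncard

/-- The `k`-tuple total domination number of `H`: the minimum cardinality of a `k`-tuple
total dominating set. -/
noncomputable def ktdn {W : Type*} (H : SimpleGraph W) (k : ℕ) : ℕ :=
  sInf {n | ∃ S : Set W, IsKTDS H k S ∧ S.ncard = n}

/-- `H` is a 2-factor of `G`: a spanning 2-regular subgraph of `G`, i.e. a vertex-disjoint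
union of cycles covering all vertices. -/
def IsTwoFactor {V : Type*} (G H : SimpleGraph V) : Prop :=
  H ≤ G ∧ ∀ v : V, (H.neighborSet v).ncard = 2

/-- `G` is a `k`-Hamiltonian-like decomposable graph (kHLD-graph): `G` contains `k`
pairwise edge-disjoint 2-factors. -/
def IsKHLD {V : Type*} (G : SimpleGraph V) (k : ℕ) : Prop :=
  ∃ F : Fin k → SimpleGraph V, (∀ i, IsTwoFactor G (F i)) ∧
    ∀ i j, i ≠ j → Disjoint (F i) (F j)

/-- `M` is a perfect matching of `G`, viewed as a 1-regular spanning subgraph. -/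
def IsPerfectMatchingGraph {V : Type*} (G M : SimpleGraph V) : Prop :=
  M ≤ G ∧ ∀ v : V, (M.neighborSet v).ncard = 1

/-- `M` is a matching of `G`: a subgraph of maximum degree at most 1. -/
def IsMatchingGraph {V : Type*} (G M : SimpleGraph V) : Prop :=
  M ≤ G ∧ ∀ v : V, (M.neighborSet v).ncard ≤ 1

/-- `G` is a kHLPM-graph: `G` contains `k` pairwise edge-disjoint 2-factors together with
a perfect matching edge-disjoint from each of these 2-factors. -/
def IsKHLPM {V : Type*} (G : SimpleGraph V) (k : ℕ) : Prop :=
  ∃ (F : Fin k → SimpleGraph V) (M : SimpleGraph V),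
    (∀ i, IsTwoFactor G (F i)) ∧ (∀ i j, i ≠ j → Disjoint (F i) (F j)) ∧
    IsPerfectMatchingGraph G M ∧ ∀ i, Disjoint M (F i)

/-- `G` is a kHLMM-graph: `G` contains `k` pairwise edge-disjoint 2-factors together with
a matching of size `⌊n/2⌋` edge-disjoint from each of these 2-factors. -/
def IsKHLMM {V : Type*} [Fintype V] (G : SimpleGraph V) (k : ℕ) : Prop :=
  ∃ (F : Fin k → SimpleGraph V) (M : SimpleGraph V),
    (∀ i, IsTwoFactor G (F i)) ∧ (∀ i j, i ≠ j → Disjoint (F i) (F j)) ∧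
    IsMatchingGraph G M ∧ M.edgeSet.ncard = Fintype.card V / 2 ∧ ∀ i, Disjoint M (F i)

/-- The graph `F` on `V ⊕ W` obtained from the disjoint union of `G` (on `V`) and `H`
(on `W`) by adding the single edge between `x : V` and `y : W`.  When `G` and `H` are
connected, this added edge is a cut-edge of `F` whose removal leaves exactly the two
components `G` and `H`. -/
def joinByEdge {V W : Type*} (G : SimpleGraph V) (H : SimpleGraph W) (x : V) (y : W) :
    SimpleGraph (V ⊕ W) :=
  SimpleGraph.fromRel (fun a b =>
    match a, b with
    | Sum.inl u, Sum.inl v => G.Adj u v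
    | Sum.inr u, Sum.inr v => H.Adj u v
    | Sum.inl u, Sum.inr v => u = x ∧ v = y
    | Sum.inr _, Sum.inl _ => False)

/-- The generalized Petersen graph `P(n,m)`: vertices `a_i` (the left copies) and `b_i`
(the right copies) for `i ∈ ZMod n`, with edges `a_i a_{i+1}`, `a_i b_i`, `b_i b_{i+m}`. -/
def genPetersen (n m : ℕ) : SimpleGraph (ZMod n ⊕ ZMod n) :=
  SimpleGraph.fromRel (fun a b =>
    match a, b with
    | Sum.inl i, Sum.inl j => j = i + 1
    | Sum.inl i, Sum.inr j => j = i
    | Sum.inr i, Sum.inr j => j = i + (m : ZMod n)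
    | Sum.inr _, Sum.inl _ => False)

/-- Cyclic distance between `i` and `j` on the cycle `ZMod n`. -/
def cycDist (n : ℕ) (i j : ZMod n) : ℕ := min (i - j).val (j - i).val

/-- The Harary graph `H_{m,n}` on `ZMod n`: each vertex is adjacent to the nearest `m/2`
vertices in each direction around the circle; if `m` is odd and `n` is even, each vertex
is also adjacent to the diametrically opposite vertex; if `m` and `n` are both odd, the
edges `(i, i + (n-1)/2)` for `0 ≤ i ≤ (n-1)/2` are added instead. -/
def harary (m n : ℕ) : SimpleGraph (ZMod n) :=
  SimpleGraph.fromRel (fun i j =>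
    (1 ≤ cycDist n i j ∧ cycDist n i j ≤ m / 2) ∨
    (m % 2 = 1 ∧ n % 2 = 0 ∧ j = i + ((n / 2 : ℕ) : ZMod n)) ∨
    (m % 2 = 1 ∧ n % 2 = 1 ∧ (∃ t : ℕ, t ≤ (n - 1) / 2 ∧ i = (t : ZMod n)) ∧
      j = i + (((n - 1) / 2 : ℕ) : ZMod n)))

/-- The graph obtained by gluing the graphs `G i` (on vertex types `V i`) at the
distinguished vertices `x i`, which are all identified to the single vertex `none`.
The `v`-components of the resulting graph at the cut-vertex `v = none` are exactly
(canonical copies of) the graphs `G i`. -/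
def wedgeAt {m : ℕ} {V : Fin m → Type*} (G : ∀ i, SimpleGraph (V i)) (x : ∀ i, V i) :
    SimpleGraph (Option (Σ i : Fin m, {u : V i // u ≠ x i})) :=
  SimpleGraph.fromRel (fun a b =>
    match a, b with
    | none, some ⟨i, u⟩ => (G i).Adj (x i) u.val
    | some ⟨i, u⟩, some ⟨j, w⟩ => ∃ h : i = j, (G j).Adj (cast (congrArg V h) u.val) w.val
    | _, _ => False)

open SimpleGraph Finset

section Aux
variable {V : Type*} {G : SimpleGraph V}

lemma dart_symm_ne (d : G.Dart) : d.symm ≠ d := by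
  intro h
  have h2 := congrArg (fun e : G.Dart => e.toProd.1) h
  simp only [Dart.symm_toProd, Prod.fst_swap] at h2
  exact d.adj.ne h2.symm

lemma eq_symm_iff (d e : G.Dart) : e = d.symm ↔ d.toProd = e.toProd.swap := by
  rw [Dart.ext_iff, Dart.symm_toProd]
  constructor <;> intro h
  · rw [h, Prod.swap_swap]
  · rw [h, Prod.swap_swap]

lemma inflation_adj (d e : G.Dart) :
    (inflation G).Adj d e ↔ d ≠ e ∧ (d.toProd.1 = e.toProd.1 ∨ e = d.symm) := by
  show (SimpleGraph.fromRel _).Adj d e ↔ _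
  rw [fromRel_adj]
  apply and_congr_right'
  rw [eq_symm_iff]
  constructor
  · rintro ((h | h) | (h | h))
    · exact Or.inl h
    · exact Or.inr h
    · exact Or.inl h.symm
    · right; rw [h, Prod.swap_swap]
  · rintro (h | h)
    · exact Or.inl (Or.inl h)
    · exact Or.inl (Or.inr h)

instance dart_finite [Finite V] : Finite G.Dart :=
  Finite.of_injective Dart.toProd (fun a b h => Dart.ext a b h)

lemma neighborSet_eq (d : G.Dart) :
    (inflation G).neighborSet d
      = {e | e.toProd.1 = d.toProd.1 ∧ e ≠ d} ∪ {d.symm} := by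
  ext e
  simp only [mem_neighborSet, inflation_adj, Set.mem_union, Set.mem_setOf_eq,
    Set.mem_singleton_iff]
  constructor
  · rintro ⟨hne, (h | h)⟩
    · exact Or.inl ⟨h.symm, hne.symm⟩
    · exact Or.inr h
  · rintro (⟨h1, h2⟩ | rfl)
    · exact ⟨h2.symm, Or.inl h1.symm⟩
    · exact ⟨(dart_symm_ne d).symm, Or.inr rfl⟩

lemma inter_neighbor_ncard [Finite V] [DecidableEq V] (S : Set G.Dart) (d : G.Dart)
    [Decidable (d.symm ∈ S)] :
    (S ∩ (inflation G).neighborSet d).ncard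
      = ((S.toFinite.toFinset.filter (fun e : G.Dart => e.toProd.1 = d.toProd.1)).erase d).card
        + (if d.symm ∈ S then 1 else 0) := by
  classical
  rw [neighborSet_eq, Set.inter_union_distrib_left]
  have hdisj : Disjoint (S ∩ {e : G.Dart | e.toProd.1 = d.toProd.1 ∧ e ≠ d}) (S ∩ {d.symm}) := by
    rw [Set.disjoint_iff]
    rintro e ⟨⟨_, h1, _⟩, _, rfl⟩
    have : d.symm.toProd.1 = d.toProd.2 := by simp [Dart.symm_toProd]
    exact d.adj.ne (this ▸ h1).symm
  rw [Set.ncard_union_eq hdisj (Set.toFinite _) (Set.toFinite _)]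
  congr 1
  · have : S ∩ {e : G.Dart | e.toProd.1 = d.toProd.1 ∧ e ≠ d}
        = ↑((S.toFinite.toFinset.filter (fun e : G.Dart => e.toProd.1 = d.toProd.1)).erase d) := by
      ext e
      simp only [Set.mem_inter_iff, Set.mem_setOf_eq, Finset.coe_erase, Set.mem_diff,
        Finset.coe_filter, Set.Finite.mem_toFinset, Set.mem_setOf_eq, Set.mem_singleton_iff]
      tauto
    rw [this, Set.ncard_coe_finset]
  · split
    · next h => rw [Set.inter_eq_self_of_subset_right (by simpa using h), Set.ncard_singleton]
    · next h => rw [Set.inter_singleton_eq_empty.mpr h, Set.ncard_empty]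
end Aux

section Aux2
variable {V : Type*} {G : SimpleGraph V} [Finite V] [DecidableEq V]

/-- number of darts of `S` in the clique of `v` -/
noncomputable def cliqueCount (S : Set G.Dart) (v : V) : ℕ :=
  (S.toFinite.toFinset.filter (fun e : G.Dart => e.toProd.1 = v)).card

lemma key_ineq {k : ℕ} {S : Set G.Dart} (hS : IsKTDS (inflation G) k S) (d : G.Dart)
    [Decidable (d ∈ S)] [Decidable (d.symm ∈ S)] :
    k + (if d ∈ S then 1 else 0)
      ≤ cliqueCount S d.toProd.1 + (if d.symm ∈ S then 1 else 0) := by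
  classical
  have h := hS d
  rw [inter_neighbor_ncard] at h
  unfold cliqueCount
  set F := S.toFinite.toFinset.filter (fun e : G.Dart => e.toProd.1 = d.toProd.1) with hF
  by_cases hd : d ∈ S
  · have hdF : d ∈ F := by
      rw [hF, Finset.mem_filter, Set.Finite.mem_toFinset]; exact ⟨hd, rfl⟩
    have := Finset.card_erase_add_one hdF
    simp only [if_pos hd]
    omega
  · have : F.erase d = F := Finset.erase_eq_of_notMem (by
      rw [hF, Finset.mem_filter, Set.Finite.mem_toFinset]; tauto)
    rw [this] at h
    simp only [if_neg hd]
    omega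

lemma count_ge {k : ℕ} {S : Set G.Dart} (hS : IsKTDS (inflation G) k S) (hk : 2 ≤ k)
    (v : V) (d₀ : G.Dart) (h₀ : d₀.toProd.1 = v) : k ≤ cliqueCount S v := by
  classical
  by_contra hlt
  push_neg at hlt
  have h1 := key_ineq hS d₀
  rw [h₀] at h1
  have hcc : 1 ≤ cliqueCount S v := by split_ifs at h1 <;> omega
  obtain ⟨d, hd⟩ := Finset.card_pos.mp hcc
  rw [Finset.mem_filter, Set.Finite.mem_toFinset] at hd
  have h2 := key_ineq hS d
  rw [hd.2] at h2
  rw [if_pos hd.1] at h2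
  split_ifs at h2 <;> omega

lemma count_ge_unmatched {k : ℕ} {S : Set G.Dart} (hS : IsKTDS (inflation G) k S)
    {d : G.Dart} (hd : d ∈ S) (hd2 : d.symm ∉ S) :
    k + 1 ≤ cliqueCount S d.toProd.1 := by
  classical
  have := key_ineq hS d
  rw [if_pos hd, if_neg hd2] at this
  omega

lemma ncard_eq_sum_cliqueCount [Fintype V] (S : Set G.Dart) :
    S.ncard = ∑ v : V, cliqueCount S v := by
  classical
  rw [Set.ncard_eq_toFinset_card S S.toFinite]
  exact Finset.card_eq_sum_card_fiberwise (fun d _ => Finset.mem_univ d.toProd.1)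
end Aux2

section Specific
variable {p q : ℕ}

abbrev BGD (p q : ℕ) := (completeBipartiteGraph (Fin p) (Fin q)).Dart

def mkL (x : Fin p) (y : Fin q) : BGD p q :=
  ⟨(Sum.inl x, Sum.inr y), by simp⟩

def mkR (y : Fin q) (x : Fin p) : BGD p q :=
  ⟨(Sum.inr y, Sum.inl x), by simp⟩

@[simp] lemma mkL_toProd (x : Fin p) (y : Fin q) :
    (mkL x y).toProd = (Sum.inl x, Sum.inr y) := rfl

@[simp] lemma mkR_toProd (y : Fin q) (x : Fin p) :
    (mkR y x).toProd = (Sum.inr y, Sum.inl x) := rfl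

@[simp] lemma mkL_symm (x : Fin p) (y : Fin q) : (mkL x y).symm = mkR y x := by
  apply SimpleGraph.Dart.ext
  rw [SimpleGraph.Dart.symm_toProd]; rfl

@[simp] lemma mkR_symm (y : Fin q) (x : Fin p) : (mkR y x).symm = mkL x y := by
  apply SimpleGraph.Dart.ext
  rw [SimpleGraph.Dart.symm_toProd]; rfl

lemma dart_cases (d : BGD p q) : (∃ x y, d = mkL x y) ∨ (∃ y x, d = mkR y x) := by
  obtain ⟨⟨a, b⟩, hadj⟩ := d
  cases a with
  | inl x =>
    cases b with
    | inl x' => simp [completeBipartiteGraph] at hadj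
    | inr y => exact Or.inl ⟨x, y, SimpleGraph.Dart.ext _ _ rfl⟩
  | inr y =>
    cases b with
    | inl x => exact Or.inr ⟨y, x, SimpleGraph.Dart.ext _ _ rfl⟩
    | inr y' => simp [completeBipartiteGraph] at hadj

end Specific

section LB
variable {p q k : ℕ}

lemma snd_isRight {d : BGD p q} (h : (d.toProd.1).isLeft) : (d.toProd.2).isRight := by
  rcases dart_cases d with ⟨x, y, rfl⟩ | ⟨y, x, rfl⟩ <;> simp_all

lemma snd_isLeft {d : BGD p q} (h : (d.toProd.1).isRight) : (d.toProd.2).isLeft := by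
  rcases dart_cases d with ⟨x, y, rfl⟩ | ⟨y, x, rfl⟩ <;> simp_all

lemma fiber_sum_left (hp : 0 < p) (A : Finset (BGD p q)) :
    (A.filter (fun d => (d.toProd.1).isLeft)).card
      = ∑ x : Fin p, (A.filter (fun d => d.toProd.1 = Sum.inl x)).card := by
  classical
  rw [Finset.card_eq_sum_card_fiberwise
    (f := fun d : BGD p q => Sum.elim id (fun _ => (⟨0, hp⟩ : Fin p)) d.toProd.1)
    (t := Finset.univ) (fun d _ => Finset.mem_univ _)]
  apply Finset.sum_congr rfl
  intro x _
  congr 1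
  ext d
  simp only [Finset.mem_filter, Finset.filter_filter]
  rcases hd1 : d.toProd.1 with a | b <;> simp [hd1]

lemma fiber_sum_right (hq : 0 < q) (A : Finset (BGD p q)) :
    (A.filter (fun d => (d.toProd.1).isRight)).card
      = ∑ y : Fin q, (A.filter (fun d => d.toProd.1 = Sum.inr y)).card := by
  classical
  rw [Finset.card_eq_sum_card_fiberwise
    (f := fun d : BGD p q => Sum.elim (fun _ => (⟨0, hq⟩ : Fin q)) id d.toProd.1)
    (t := Finset.univ) (fun d _ => Finset.mem_univ _)]
  apply Finset.sum_congr rfl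
  intro y _
  congr 1
  ext d
  simp only [Finset.mem_filter, Finset.filter_filter]
  rcases hd1 : d.toProd.1 with a | b <;> simp [hd1]

lemma lower_bound (hk : 2 ≤ k) (hkp : k < p) (hpq : p ≤ q)
    (S : Set (BGD p q))
    (hS : IsKTDS (inflation (completeBipartiteGraph (Fin p) (Fin q))) k S) :
    2 * p * k + (q - p) * (k + 1) ≤ S.ncard := by
  classical
  have hp : 0 < p := by omega
  have hq : 0 < q := by omega
  set T := S.toFinite.toFinset with hT
  have hmemT : ∀ d : BGD p q, d ∈ T ↔ d ∈ S := fun d => Set.Finite.mem_toFinset _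
  have hcc : ∀ v, cliqueCount S v = (T.filter (fun d => d.toProd.1 = v)).card :=
    fun v => rfl
  -- basic per-clique lower bounds
  have hl : ∀ x : Fin p, k ≤ cliqueCount S (Sum.inl x) :=
    fun x => count_ge hS hk _ (mkL x ⟨0, hq⟩) rfl
  have hr : ∀ y : Fin q, k ≤ cliqueCount S (Sum.inr y) :=
    fun y => count_ge hS hk _ (mkR y ⟨0, hp⟩) rfl
  have htotal : S.ncard = (∑ x : Fin p, cliqueCount S (Sum.inl x))
      + ∑ y : Fin q, cliqueCount S (Sum.inr y) := by
    rw [ncard_eq_sum_cliqueCount, Fintype.sum_sum_type]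
  -- matched darts
  set M := T.filter (fun d => d.symm ∈ T) with hM
  have mcount_le : ∀ v, (M.filter (fun d => d.toProd.1 = v)).card ≤ cliqueCount S v := by
    intro v
    rw [hcc]
    apply Finset.card_le_card
    intro d hd
    rw [Finset.mem_filter] at hd ⊢
    exact ⟨(Finset.mem_filter.mp hd.1).1, hd.2⟩
  -- matched darts on the left and right are in bijection via symm
  have hMswap : (M.filter (fun d => (d.toProd.1).isLeft)).card
      = (M.filter (fun d => (d.toProd.1).isRight)).card := by
    apply Finset.card_nbij' (fun d => d.symm) (fun d => d.symm)
    · intro d hd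
      rw [Finset.mem_coe, Finset.mem_filter, hM, Finset.mem_filter] at hd ⊢
      refine ⟨⟨hd.1.2, by rw [SimpleGraph.Dart.symm_symm]; exact hd.1.1⟩, ?_⟩
      have : d.symm.toProd.1 = d.toProd.2 := by rw [SimpleGraph.Dart.symm_toProd]; rfl
      rw [this]
      exact snd_isRight hd.2
    · intro d hd
      rw [Finset.mem_coe, Finset.mem_filter, hM, Finset.mem_filter] at hd ⊢
      refine ⟨⟨hd.1.2, by rw [SimpleGraph.Dart.symm_symm]; exact hd.1.1⟩, ?_⟩
      have : d.symm.toProd.1 = d.toProd.2 := by rw [SimpleGraph.Dart.symm_toProd]; rfl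
      rw [this]
      exact snd_isLeft hd.2
    · intro d _; exact SimpleGraph.Dart.symm_symm d
    · intro d _; exact SimpleGraph.Dart.symm_symm d
  -- the set of "deficient" right vertices
  set R1 := Finset.univ.filter
    (fun y : Fin q => ∃ d, d ∈ T ∧ d.toProd.1 = Sum.inr y ∧ d.symm ∉ T) with hR1
  set a := R1.card with ha
  have haq : a ≤ q := by
    calc a ≤ Finset.univ.card := Finset.card_filter_le _ _
    _ = q := by simp
  have hR1s : ∀ y ∈ R1, k + 1 ≤ cliqueCount S (Sum.inr y) := by
    intro y hy
    rw [hR1, Finset.mem_filter] at hy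
    obtain ⟨d, hdT, hd1, hdsym⟩ := hy.2
    have := count_ge_unmatched hS ((hmemT d).mp hdT)
      (fun hc => hdsym ((hmemT d.symm).mpr hc))
    rwa [hd1] at this
  have hR0 : ∀ y ∈ Finset.univ \ R1,
      (M.filter (fun d => d.toProd.1 = Sum.inr y)).card = cliqueCount S (Sum.inr y) := by
    intro y hy
    have hy2 : y ∉ R1 := (Finset.mem_sdiff.mp hy).2
    rw [hR1, Finset.mem_filter] at hy2
    have hy' : ∀ d, d ∈ T → d.toProd.1 = Sum.inr y → d.symm ∈ T := by
      intro d hdT hd1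
      by_contra hcn
      exact hy2 ⟨Finset.mem_univ y, d, hdT, hd1, hcn⟩
    rw [hcc]
    congr 1
    ext d
    rw [hM, Finset.filter_filter, Finset.mem_filter, Finset.mem_filter]
    constructor
    · rintro ⟨h1, h2, h3⟩; exact ⟨h1, h3⟩
    · rintro ⟨h1, h2⟩; exact ⟨h1, hy' d h1 h2, h2⟩
  -- sum over right part
  obtain ⟨c, hc⟩ : ∃ c, q = a + c := ⟨q - a, by omega⟩
  have hcardsd : (Finset.univ \ R1).card = c := by
    rw [Finset.card_sdiff_of_subset (Finset.subset_univ _)]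
    simp [← ha]
    omega
  have e2 : c * k ≤ ∑ y ∈ Finset.univ \ R1, cliqueCount S (Sum.inr y) := by
    calc c * k = ∑ _y ∈ Finset.univ \ R1, k := by
          rw [Finset.sum_const, hcardsd, smul_eq_mul]
    _ ≤ _ := Finset.sum_le_sum (fun y _ => hr y)
  have e1 : a * (k + 1) ≤ ∑ y ∈ R1, cliqueCount S (Sum.inr y) := by
    calc a * (k + 1) = ∑ _y ∈ R1, (k + 1) := by rw [Finset.sum_const, smul_eq_mul]
    _ ≤ _ := Finset.sum_le_sum hR1s
  have e3 : ∑ y ∈ Finset.univ \ R1, cliqueCount S (Sum.inr y)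
      + ∑ y ∈ R1, cliqueCount S (Sum.inr y) = ∑ y : Fin q, cliqueCount S (Sum.inr y) :=
    Finset.sum_sdiff (Finset.subset_univ _)
  have hsum_r : q * k + a ≤ ∑ y : Fin q, cliqueCount S (Sum.inr y) := by
    have : q * k + a = c * k + a * (k + 1) := by rw [hc]; ring
    omega
  -- sums over left part
  have hsum_l1 : p * k ≤ ∑ x : Fin p, cliqueCount S (Sum.inl x) := by
    calc p * k = ∑ _x : Fin p, k := by rw [Finset.sum_const, smul_eq_mul]; simp
    _ ≤ _ := Finset.sum_le_sum (fun x _ => hl x)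
  have hsum_l2 : c * k ≤ ∑ x : Fin p, cliqueCount S (Sum.inl x) := by
    calc c * k ≤ ∑ y ∈ Finset.univ \ R1, cliqueCount S (Sum.inr y) := e2
    _ = ∑ y ∈ Finset.univ \ R1, (M.filter (fun d => d.toProd.1 = Sum.inr y)).card :=
        (Finset.sum_congr rfl (fun y hy => (hR0 y hy).symm))
    _ ≤ ∑ y : Fin q, (M.filter (fun d => d.toProd.1 = Sum.inr y)).card :=
        Finset.sum_le_sum_of_subset (Finset.sdiff_subset)
    _ = (M.filter (fun d => (d.toProd.1).isRight)).card := (fiber_sum_right hq M).symm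
    _ = (M.filter (fun d => (d.toProd.1).isLeft)).card := hMswap.symm
    _ = ∑ x : Fin p, (M.filter (fun d => d.toProd.1 = Sum.inl x)).card := fiber_sum_left hp M
    _ ≤ _ := Finset.sum_le_sum (fun x _ => mcount_le (Sum.inl x))
  -- final arithmetic
  obtain ⟨e, rfl⟩ : ∃ e, q = p + e := ⟨q - p, by omega⟩
  have hqp : p + e - p = e := by omega
  rw [hqp]
  rcases le_or_gt e a with hcase | hcase
  · have : 2 * p * k + e * (k + 1) ≤ p * k + (p + e) * k + a := by nlinarith
    omega
  · -- a < e, so c = q - a = p + (e - a) with e - a = b > 0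
    obtain ⟨b, hb⟩ : ∃ b, e = a + b := ⟨e - a, by omega⟩
    have hcb : c = p + b := by omega
    have hbk : b ≤ b * k := Nat.le_mul_of_pos_right b (by omega)
    have : 2 * p * k + e * (k + 1) ≤ c * k + ((p + e) * k + a) := by
      rw [hb, hcb]
      nlinarith
    omega
end LB

section ModHelpers

lemma modH1 {p a j : ℕ} (ha : a < p) (hj : j < p) : ((a + j) % p + p - a) % p = j := by
  rcases Nat.lt_or_ge (a + j) p with h | h
  · rw [Nat.mod_eq_of_lt h]
    have h2 : a + j + p - a = j + p := by omega
    rw [h2, Nat.add_mod_right, Nat.mod_eq_of_lt hj]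
  · have h2 : (a + j) % p = a + j - p := by
      rw [Nat.mod_eq_sub_mod h, Nat.mod_eq_of_lt (by omega)]
    rw [h2]
    have h3 : a + j - p + p - a = j := by omega
    rw [h3, Nat.mod_eq_of_lt hj]

lemma modH2 {p a t : ℕ} (ha : a < p) (ht : t < p) : (a + (t + p - a) % p) % p = t := by
  rcases le_or_gt a t with h | h
  · have h1 : t + p - a = (t - a) + p := by omega
    rw [h1, Nat.add_mod_right, Nat.mod_eq_of_lt (show t - a < p by omega)]
    have h2 : a + (t - a) = t := by omega
    rw [h2, Nat.mod_eq_of_lt ht]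
  · rw [Nat.mod_eq_of_lt (show t + p - a < p by omega)]
    have h2 : a + (t + p - a) = t + p := by omega
    rw [h2, Nat.add_mod_right, Nat.mod_eq_of_lt ht]

lemma modH3 {p a t : ℕ} (ha : a < p) (ht : t < p) : (a + p - (a + p - t) % p) % p = t := by
  rcases le_or_gt t a with h | h
  · have h1 : a + p - t = (a - t) + p := by omega
    rw [h1, Nat.add_mod_right, Nat.mod_eq_of_lt (show a - t < p by omega)]
    have h2 : a + p - (a - t) = t + p := by omega
    rw [h2, Nat.add_mod_right, Nat.mod_eq_of_lt ht]
  · rw [Nat.mod_eq_of_lt (show a + p - t < p by omega)]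
    have h2 : a + p - (a + p - t) = t := by omega
    rw [h2, Nat.mod_eq_of_lt ht]

end ModHelpers

section Upper
variable {p q k : ℕ}

/-- the construction: the dominating set -/
def inS (p q k : ℕ) (d : BGD p q) : Prop :=
  match d.toProd with
  | (Sum.inl x, Sum.inr y) => (y : ℕ) < p ∧ ((y : ℕ) + p - (x : ℕ)) % p < k
  | (Sum.inr y, Sum.inl x) =>
      ((y : ℕ) < p ∧ ((y : ℕ) + p - (x : ℕ)) % p < k) ∨ (p ≤ (y : ℕ) ∧ (x : ℕ) ≤ k)
  | _ => False

lemma inS_mkL (x : Fin p) (y : Fin q) :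
    inS p q k (mkL x y) = ((y : ℕ) < p ∧ ((y : ℕ) + p - (x : ℕ)) % p < k) := rfl

lemma inS_mkR (y : Fin q) (x : Fin p) :
    inS p q k (mkR y x)
      = (((y : ℕ) < p ∧ ((y : ℕ) + p - (x : ℕ)) % p < k) ∨ (p ≤ (y : ℕ) ∧ (x : ℕ) ≤ k)) := rfl

lemma eq_mkL {d : BGD p q} {x : Fin p} (h : d.toProd.1 = Sum.inl x) : ∃ y, d = mkL x y := by
  rcases dart_cases d with ⟨x', y, rfl⟩ | ⟨y, x', rfl⟩
  · simp only [mkL_toProd] at h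
    obtain rfl : x' = x := by simpa using h
    exact ⟨y, rfl⟩
  · simp at h

lemma eq_mkR {d : BGD p q} {y : Fin q} (h : d.toProd.1 = Sum.inr y) : ∃ x, d = mkR y x := by
  rcases dart_cases d with ⟨x, y', rfl⟩ | ⟨y', x, rfl⟩
  · simp at h
  · simp only [mkR_toProd] at h
    obtain rfl : y' = y := by simpa using h
    exact ⟨x, rfl⟩

open Classical in
lemma cliqueCount_left (hq : 0 < q) (P : Set (BGD p q)) (x : Fin p) :
    cliqueCount P (Sum.inl x)
      = (Finset.univ.filter (fun y : Fin q => mkL x y ∈ P)).card := by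
  classical
  apply Finset.card_nbij'
    (fun d => Sum.elim (fun _ => (⟨0, hq⟩ : Fin q)) id d.toProd.2) (fun y => mkL x y)
  · intro d hd
    rw [Finset.mem_coe, Finset.mem_filter, Set.Finite.mem_toFinset] at hd
    obtain ⟨y, rfl⟩ := eq_mkL hd.2
    rw [Finset.mem_coe, Finset.mem_filter]
    exact ⟨Finset.mem_univ _, hd.1⟩
  · intro y hy
    rw [Finset.mem_coe, Finset.mem_filter] at hy
    rw [Finset.mem_coe, Finset.mem_filter, Set.Finite.mem_toFinset]
    exact ⟨hy.2, rfl⟩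
  · intro d hd
    rw [Finset.mem_coe, Finset.mem_filter] at hd
    obtain ⟨y, rfl⟩ := eq_mkL hd.2
    rfl
  · intro y _; rfl

open Classical in
lemma cliqueCount_right (hp : 0 < p) (P : Set (BGD p q)) (y : Fin q) :
    cliqueCount P (Sum.inr y)
      = (Finset.univ.filter (fun x : Fin p => mkR y x ∈ P)).card := by
  classical
  apply Finset.card_nbij'
    (fun d => Sum.elim id (fun _ => (⟨0, hp⟩ : Fin p)) d.toProd.2) (fun x => mkR y x)
  · intro d hd
    rw [Finset.mem_coe, Finset.mem_filter, Set.Finite.mem_toFinset] at hd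
    obtain ⟨x, rfl⟩ := eq_mkR hd.2
    rw [Finset.mem_coe, Finset.mem_filter]
    exact ⟨Finset.mem_univ _, hd.1⟩
  · intro x hx
    rw [Finset.mem_coe, Finset.mem_filter] at hx
    rw [Finset.mem_coe, Finset.mem_filter, Set.Finite.mem_toFinset]
    exact ⟨hx.2, rfl⟩
  · intro d hd
    rw [Finset.mem_coe, Finset.mem_filter] at hd
    obtain ⟨x, rfl⟩ := eq_mkR hd.2
    rfl
  · intro x _; rfl

lemma count_sL (hkp : k < p) (hpq : p ≤ q) (x : Fin p) :
    cliqueCount {d : BGD p q | inS p q k d} (Sum.inl x) = k := by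
  classical
  have hp : 0 < p := by omega
  rw [cliqueCount_left (by omega)]
  trans (Finset.range k).card
  swap
  · exact Finset.card_range k
  apply Finset.card_nbij' (t := Finset.range k)
    (fun y : Fin q => ((y : ℕ) + p - (x : ℕ)) % p)
    (fun j => (⟨((x : ℕ) + j) % p, lt_of_lt_of_le (Nat.mod_lt _ hp) hpq⟩ : Fin q))
  · intro y hy
    rw [Finset.mem_coe, Finset.mem_filter] at hy
    have h2 : ((y : ℕ) + p - (x : ℕ)) % p < k := hy.2.2
    simpa [Finset.mem_range] using h2
  · intro j hj
    rw [Finset.mem_coe, Finset.mem_range] at hj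
    rw [Finset.mem_coe, Finset.mem_filter]
    refine ⟨Finset.mem_univ _, ?_, ?_⟩
    · exact Nat.mod_lt _ hp
    · show ((((x : ℕ) + j) % p) + p - (x : ℕ)) % p < k
      rw [modH1 x.isLt (by omega)]
      exact hj
  · intro y hy
    rw [Finset.mem_coe, Finset.mem_filter] at hy
    apply Fin.ext
    show ((x : ℕ) + ((y : ℕ) + p - (x : ℕ)) % p) % p = (y : ℕ)
    exact modH2 x.isLt hy.2.1
  · intro j hj
    rw [Finset.mem_coe, Finset.mem_range] at hj
    show ((((x : ℕ) + j) % p) + p - (x : ℕ)) % p = j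
    exact modH1 x.isLt (by omega)

lemma count_sR_lt (hk : 2 ≤ k) (hkp : k < p) {y : Fin q} (hy : (y : ℕ) < p) :
    cliqueCount {d : BGD p q | inS p q k d} (Sum.inr y) = k := by
  classical
  have hp : 0 < p := by omega
  rw [cliqueCount_right hp]
  have hpred : ∀ x : Fin p, (mkR y x ∈ {d : BGD p q | inS p q k d})
      ↔ ((y : ℕ) + p - (x : ℕ)) % p < k := by
    intro x
    constructor
    · rintro (⟨_, h⟩ | ⟨h, _⟩)
      · exact h
      · omega
    · intro h; exact Or.inl ⟨hy, h⟩
  rw [Finset.filter_congr (fun x _ => hpred x)]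
  trans (Finset.range k).card
  swap
  · exact Finset.card_range k
  apply Finset.card_nbij' (t := Finset.range k)
    (fun x : Fin p => ((y : ℕ) + p - (x : ℕ)) % p)
    (fun j => (⟨((y : ℕ) + p - j) % p, Nat.mod_lt _ hp⟩ : Fin p))
  · intro x hx
    rw [Finset.mem_coe, Finset.mem_filter] at hx
    simpa [Finset.mem_range] using hx.2
  · intro j hj
    rw [Finset.mem_coe, Finset.mem_range] at hj
    rw [Finset.mem_coe, Finset.mem_filter]
    refine ⟨Finset.mem_univ _, ?_⟩
    show ((y : ℕ) + p - ((y : ℕ) + p - j) % p) % p < k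
    rw [modH3 hy (by omega)]
    exact hj
  · intro x hx
    rw [Finset.mem_coe, Finset.mem_filter] at hx
    apply Fin.ext
    show ((y : ℕ) + p - ((y : ℕ) + p - (x : ℕ)) % p) % p = (x : ℕ)
    exact modH3 hy x.isLt
  · intro j hj
    rw [Finset.mem_coe, Finset.mem_range] at hj
    show ((y : ℕ) + p - ((y : ℕ) + p - j) % p) % p = j
    exact modH3 hy (by omega)

lemma count_sR_ge (hk : 2 ≤ k) (hkp : k < p) {y : Fin q} (hy : p ≤ (y : ℕ)) :
    cliqueCount {d : BGD p q | inS p q k d} (Sum.inr y) = k + 1 := by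
  classical
  have hp : 0 < p := by omega
  rw [cliqueCount_right hp]
  have hpred : ∀ x : Fin p, (mkR y x ∈ {d : BGD p q | inS p q k d})
      ↔ (x : ℕ) ≤ k := by
    intro x
    constructor
    · rintro (⟨h, _⟩ | ⟨_, h⟩)
      · omega
      · exact h
    · intro h; exact Or.inr ⟨hy, h⟩
  rw [Finset.filter_congr (fun x _ => hpred x)]
  trans (Finset.range (k + 1)).card
  swap
  · exact Finset.card_range (k + 1)
  apply Finset.card_nbij' (t := Finset.range (k + 1))
    (fun x : Fin p => (x : ℕ)) (fun j => (⟨j % p, Nat.mod_lt _ hp⟩ : Fin p))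
  · intro x hx
    rw [Finset.mem_coe, Finset.mem_filter] at hx
    rw [Finset.mem_coe, Finset.mem_range]
    show (x : ℕ) < k + 1
    omega
  · intro j hj
    rw [Finset.mem_coe, Finset.mem_range] at hj
    rw [Finset.mem_coe, Finset.mem_filter]
    refine ⟨Finset.mem_univ _, ?_⟩
    show j % p ≤ k
    rw [Nat.mod_eq_of_lt (by omega)]
    omega
  · intro x hx
    rw [Finset.mem_coe, Finset.mem_filter] at hx
    apply Fin.ext
    show (x : ℕ) % p = (x : ℕ)
    exact Nat.mod_eq_of_lt x.isLt
  · intro j hj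
    rw [Finset.mem_coe, Finset.mem_range] at hj
    show j % p = j
    exact Nat.mod_eq_of_lt (by omega)

lemma countYlt (hp : 0 < p) (hpq : p ≤ q) :
    (Finset.univ.filter (fun y : Fin q => (y : ℕ) < p)).card = p := by
  classical
  trans (Finset.range p).card
  swap
  · exact Finset.card_range p
  apply Finset.card_nbij' (t := Finset.range p)
    (fun y : Fin q => (y : ℕ)) (fun j => (⟨j % q, Nat.mod_lt _ (by omega)⟩ : Fin q))
  · intro y hy
    rw [Finset.mem_coe, Finset.mem_filter] at hy
    rw [Finset.mem_coe, Finset.mem_range]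
    exact hy.2
  · intro j hj
    rw [Finset.mem_coe, Finset.mem_range] at hj
    rw [Finset.mem_coe, Finset.mem_filter]
    refine ⟨Finset.mem_univ _, ?_⟩
    show j % q < p
    rw [Nat.mod_eq_of_lt (by omega)]
    exact hj
  · intro y hy
    apply Fin.ext
    show (y : ℕ) % q = (y : ℕ)
    exact Nat.mod_eq_of_lt y.isLt
  · intro j hj
    rw [Finset.mem_coe, Finset.mem_range] at hj
    show j % q = j
    exact Nat.mod_eq_of_lt (by omega)

end Upper

section Assemble
variable {p q k : ℕ}

open Classical in
lemma erase_card_mem {V : Type*} [Finite V] [DecidableEq V] {G : SimpleGraph V}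
    {S : Set G.Dart} {d : G.Dart} (hd : d ∈ S) :
    ((S.toFinite.toFinset.filter (fun e : G.Dart => e.toProd.1 = d.toProd.1)).erase d).card + 1
      = cliqueCount S d.toProd.1 :=
  Finset.card_erase_add_one (by
    rw [Finset.mem_filter, Set.Finite.mem_toFinset]; exact ⟨hd, rfl⟩)

open Classical in
lemma erase_card_not_mem {V : Type*} [Finite V] [DecidableEq V] {G : SimpleGraph V}
    {S : Set G.Dart} {d : G.Dart} (hd : d ∉ S) :
    ((S.toFinite.toFinset.filter (fun e : G.Dart => e.toProd.1 = d.toProd.1)).erase d).card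
      = cliqueCount S d.toProd.1 := by
  rw [Finset.erase_eq_of_notMem (by
    rw [Finset.mem_filter, Set.Finite.mem_toFinset]; tauto)]
  rfl

lemma upper_ktds (hk : 2 ≤ k) (hkp : k < p) (hpq : p ≤ q) :
    IsKTDS (inflation (completeBipartiteGraph (Fin p) (Fin q))) k
      {d : BGD p q | inS p q k d} := by
  classical
  intro d
  rw [inter_neighbor_ncard]
  rcases dart_cases d with ⟨x, y, rfl⟩ | ⟨y, x, rfl⟩
  · have hcc : cliqueCount {d : BGD p q | inS p q k d} ((mkL x y).toProd.1) = k :=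
      count_sL hkp hpq x
    by_cases hd : mkL x y ∈ {d : BGD p q | inS p q k d}
    · have h1 := erase_card_mem hd
      have hsym : (mkL x y).symm ∈ {d : BGD p q | inS p q k d} := by
        rw [mkL_symm]
        exact Or.inl hd
      rw [if_pos hsym]
      omega
    · rw [erase_card_not_mem hd]
      split_ifs <;> omega
  · rcases lt_or_ge (y : ℕ) p with hy | hy
    · have hcc : cliqueCount {d : BGD p q | inS p q k d} ((mkR y x).toProd.1) = k :=
        count_sR_lt hk hkp hy
      by_cases hd : mkR y x ∈ {d : BGD p q | inS p q k d}
      · have hd' : ((y : ℕ) < p ∧ ((y : ℕ) + p - (x : ℕ)) % p < k) := by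
          rcases hd with h | h
          · exact h
          · exact absurd h.1 (by omega)
        have h1 := erase_card_mem hd
        have hsym : (mkR y x).symm ∈ {d : BGD p q | inS p q k d} := by
          rw [mkR_symm]
          exact hd'
        rw [if_pos hsym]
        omega
      · rw [erase_card_not_mem hd]
        split_ifs <;> omega
    · have hcc : cliqueCount {d : BGD p q | inS p q k d} ((mkR y x).toProd.1) = k + 1 :=
        count_sR_ge hk hkp hy
      by_cases hd : mkR y x ∈ {d : BGD p q | inS p q k d}
      · have h1 := erase_card_mem hd
        split_ifs <;> omega
      · rw [erase_card_not_mem hd]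
        split_ifs <;> omega

lemma upper_card (hk : 2 ≤ k) (hkp : k < p) (hpq : p ≤ q) :
    ({d : BGD p q | inS p q k d}).ncard = 2 * p * k + (q - p) * (k + 1) := by
  classical
  have hp : 0 < p := by omega
  rw [ncard_eq_sum_cliqueCount, Fintype.sum_sum_type]
  have h1 : ∑ x : Fin p, cliqueCount {d : BGD p q | inS p q k d} (Sum.inl x) = p * k := by
    rw [Finset.sum_congr rfl (fun x _ => count_sL hkp hpq x), Finset.sum_const]
    simp [mul_comm]
  have h2 : ∑ y : Fin q, cliqueCount {d : BGD p q | inS p q k d} (Sum.inr y)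
      = p * k + (q - p) * (k + 1) := by
    have hite : ∀ y : Fin q, cliqueCount {d : BGD p q | inS p q k d} (Sum.inr y)
        = if (y : ℕ) < p then k else (k + 1) := by
      intro y
      split_ifs with h
      · exact count_sR_lt hk hkp h
      · exact count_sR_ge hk hkp (by omega)
    rw [Finset.sum_congr rfl (fun y _ => hite y), Finset.sum_ite,
      Finset.sum_const, Finset.sum_const]
    have hcompl : (Finset.univ.filter (fun y : Fin q => ¬ (y : ℕ) < p)).card = q - p := by
      have hh := Finset.card_filter_add_card_filter_not
        (s := (Finset.univ : Finset (Fin q))) (p := fun y : Fin q => (y : ℕ) < p)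
      rw [countYlt hp hpq] at hh
      simp only [Finset.card_univ, Fintype.card_fin] at hh
      omega
    rw [hcompl, countYlt hp hpq]
    simp [smul_eq_mul]
  rw [h1, h2]
  ring
end Assemble
/-- **Proposition (`K_{p,q}`).** For `q ≥ p > k ≥ 2`,
`γ_{×k,t}((K_{p,q})_I) = 2pk + (q - p)(k + 1)`. -/
theorem stmt17 (p q k : ℕ) (hk : 2 ≤ k) (hkp : k < p) (hpq : p ≤ q) :
    ktdn (inflation (completeBipartiteGraph (Fin p) (Fin q))) k
      = 2 * p * k + (q - p) * (k + 1) := by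
  classical
  apply le_antisymm
  · exact Nat.sInf_le ⟨_, upper_ktds hk hkp hpq, upper_card hk hkp hpq⟩
  · refine le_csInf ⟨_, _, upper_ktds hk hkp hpq, upper_card hk hkp hpq⟩ ?_
    rintro n ⟨S, hS, rfl⟩
    exact lower_bound hk hkp hpq S hS
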